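/- Let X and Y be countable sets with the discrete topology. If a sequence {μ_n} of probability measures on X × Y converges to μ in the weak-* topology, then μ_n converges to μ in the topology of information. -/

import Mathlib

open MeasureTheory ProbabilityTheory Filter Topology BoundedContinuousFunction

instance {Ω : Type*} [MeasurableSpace Ω] : MeasurableSpace (ProbabilityMeasure Ω) :=
  Subtype.instMeasurableSpace

/-- Weak-* convergence of a sequence of measures. -/
def WeakTendsto {Ω : Type*} [MeasurableSpace Ω] [TopologicalSpace Ω]
    (μ : ℕ → Measure Ω) (μ₀ : Measure Ω) : Prop :=
  ∀ f : Ω →ᵇ ℝ, Tendsto (fun n => ∫ x, f x ∂(μ n)) atTop (𝓝 (∫ x, f x ∂μ₀))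

/-- The map `ψ` sending `μ ∈ P(X × Y)` to the law of `x ↦ (x, μ(·|x))` under the `X`-marginal. -/
noncomputable def infoMeasure {X Y : Type*} [MeasurableSpace X]
    [MeasurableSpace Y] [TopologicalSpace Y] [PolishSpace Y] [BorelSpace Y] [Nonempty Y]
    (μ : Measure (X × Y)) [IsFiniteMeasure μ] : Measure (X × ProbabilityMeasure Y) :=
  (μ.map Prod.fst).map (fun x => (x, ⟨μ.condKernel x, inferInstance⟩))

/-! ### Auxiliary lemmas -/

/-- Scheffé-type convergence lemma: if nonnegative summable weights converge pointwise with
constant total mass, and uniformly bounded values converge pointwise at points of positive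
limiting mass, then the weighted sums converge. -/
private lemma lemB {ι : Type*} {a : ℕ → ι → ℝ} {a0 : ι → ℝ} {F : ℕ → ι → ℝ} {F0 : ι → ℝ} {C : ℝ}
    (ha_nonneg : ∀ n i, 0 ≤ a n i) (ha0_nonneg : ∀ i, 0 ≤ a0 i)
    (ha_summ : ∀ n, Summable (a n)) (ha0_summ : Summable a0)
    (hmass : ∀ n, ∑' i, a n i = ∑' i, a0 i)
    (ha : ∀ i, Tendsto (fun n => a n i) atTop (𝓝 (a0 i)))
    (hFb : ∀ n i, |F n i| ≤ C) (hF0b : ∀ i, |F0 i| ≤ C)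
    (hF : ∀ i, 0 < a0 i → Tendsto (fun n => F n i) atTop (𝓝 (F0 i))) :
    Tendsto (fun n => ∑' i, a n i * F n i) atTop (𝓝 (∑' i, a0 i * F0 i)) := by
  rcases isEmpty_or_nonempty ι with h | h
  · simpa [tsum_empty] using tendsto_const_nhds
  have hC : 0 ≤ C := le_trans (abs_nonneg _) (hF0b (Classical.arbitrary ι))
  set pos : ℕ → ι → ℝ := fun n i => max (a0 i - a n i) 0 with hposdef
  have hpos_nonneg : ∀ n i, 0 ≤ pos n i := fun n i => le_max_right _ _
  have hpos_le : ∀ n i, pos n i ≤ a0 i := fun n i =>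
    max_le (by linarith [ha_nonneg n i]) (ha0_nonneg i)
  have hpos_summ : ∀ n, Summable (pos n) := fun n =>
    ha0_summ.of_nonneg_of_le (hpos_nonneg n) (hpos_le n)
  have hsub_summ : ∀ n, Summable (fun i => a0 i - a n i) := fun n => ha0_summ.sub (ha_summ n)
  have habs_summ : ∀ n, Summable (fun i => |a0 i - a n i|) := fun n => (hsub_summ n).abs
  have hpos_tend : Tendsto (fun n => ∑' i, pos n i) atTop (𝓝 0) := by
    have h := tendsto_tsum_of_dominated_convergence (𝓕 := (atTop : Filter ℕ)) (f := pos) (g := fun _ => 0) (bound := a0)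
      ha0_summ
      (fun i => by
        have : Tendsto (fun n => max (a0 i - a n i) 0) atTop (𝓝 (max (a0 i - a0 i) 0)) :=
          ((tendsto_const_nhds.sub (ha i)).max tendsto_const_nhds)
        simpa using this)
      (Eventually.of_forall fun n i => by
        rw [Real.norm_eq_abs, abs_of_nonneg (hpos_nonneg n i)]; exact hpos_le n i)
    simpa using h
  have habs : ∀ n, ∑' i, |a0 i - a n i| = 2 * ∑' i, pos n i := by
    intro n
    have h1 : ∀ i, |a0 i - a n i| = 2 * pos n i - (a0 i - a n i) := by
      intro i
      rcases le_total (a0 i - a n i) 0 with h | h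
      · rw [abs_of_nonpos h]
        have : pos n i = 0 := max_eq_right h
        rw [this]; ring
      · rw [abs_of_nonneg h]
        have : pos n i = a0 i - a n i := max_eq_left h
        rw [this]; ring
    calc ∑' i, |a0 i - a n i| = ∑' i, (2 * pos n i - (a0 i - a n i)) := tsum_congr h1
      _ = ∑' i, 2 * pos n i - ∑' i, (a0 i - a n i) :=
          ((hpos_summ n).mul_left 2).tsum_sub (hsub_summ n)
      _ = 2 * ∑' i, pos n i - (∑' i, a0 i - ∑' i, a n i) := by
          rw [tsum_mul_left, ha0_summ.tsum_sub (ha_summ n)]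
      _ = 2 * ∑' i, pos n i := by rw [hmass n, sub_self, sub_zero]
  have htv : Tendsto (fun n => ∑' i, |a0 i - a n i|) atTop (𝓝 0) := by
    have h := hpos_tend.const_mul 2
    rw [mul_zero] at h
    exact h.congr fun n => (habs n).symm
  have hmul_summ : ∀ n, Summable (fun i => a n i * F n i) := by
    intro n
    refine Summable.of_norm_bounded ((ha_summ n).mul_right C) fun i => ?_
    rw [Real.norm_eq_abs, abs_mul, abs_of_nonneg (ha_nonneg n i)]
    exact mul_le_mul_of_nonneg_left (hFb n i) (ha_nonneg n i)
  have hmul0_summ : Summable (fun i => a0 i * F0 i) := by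
    refine Summable.of_norm_bounded (ha0_summ.mul_right C) fun i => ?_
    rw [Real.norm_eq_abs, abs_mul, abs_of_nonneg (ha0_nonneg i)]
    exact mul_le_mul_of_nonneg_left (hF0b i) (ha0_nonneg i)
  have hdiff_bdd : ∀ n i, |F n i - F0 i| ≤ C + C := fun n i =>
    (abs_sub _ _).trans (add_le_add (hFb n i) (hF0b i))
  have hdiff_summ : ∀ n, Summable (fun i => a0 i * |F n i - F0 i|) := by
    intro n
    refine Summable.of_nonneg_of_le (fun i => mul_nonneg (ha0_nonneg i) (abs_nonneg _))
      (fun i => mul_le_mul_of_nonneg_left (hdiff_bdd n i) (ha0_nonneg i))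
      (ha0_summ.mul_right (C + C))
  have herr : Tendsto (fun n => ∑' i, a0 i * |F n i - F0 i|) atTop (𝓝 0) := by
    have h := tendsto_tsum_of_dominated_convergence (𝓕 := (atTop : Filter ℕ))
      (f := fun n i => a0 i * |F n i - F0 i|) (g := fun _ => 0)
      (bound := fun i => a0 i * (C + C)) (ha0_summ.mul_right _)
      (fun i => by
        rcases eq_or_lt_of_le (ha0_nonneg i) with h0 | h0
        · simpa [← h0] using tendsto_const_nhds
        · have h1 : Tendsto (fun n => |F n i - F0 i|) atTop (𝓝 0) := by
            have := ((hF i h0).sub (tendsto_const_nhds (x := F0 i))).abs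
            simpa using this
          have := h1.const_mul (a0 i)
          simpa using this)
      (Eventually.of_forall fun n i => by
        rw [Real.norm_eq_abs, abs_of_nonneg (mul_nonneg (ha0_nonneg i) (abs_nonneg _))]
        exact mul_le_mul_of_nonneg_left (hdiff_bdd n i) (ha0_nonneg i))
    simpa using h
  have hbound : ∀ n, |∑' i, a n i * F n i - ∑' i, a0 i * F0 i| ≤
      C * ∑' i, |a0 i - a n i| + ∑' i, a0 i * |F n i - F0 i| := by
    intro n
    have hd : ∑' i, a n i * F n i - ∑' i, a0 i * F0 i
        = ∑' i, (a n i * F n i - a0 i * F0 i) := ((hmul_summ n).tsum_sub hmul0_summ).symm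
    have hsd : Summable (fun i => a n i * F n i - a0 i * F0 i) := (hmul_summ n).sub hmul0_summ
    have hb : ∀ i, |a n i * F n i - a0 i * F0 i|
        ≤ |a0 i - a n i| * C + a0 i * |F n i - F0 i| := by
      intro i
      have heq : a n i * F n i - a0 i * F0 i
          = (a n i - a0 i) * F n i + a0 i * (F n i - F0 i) := by ring
      rw [heq]
      calc |(a n i - a0 i) * F n i + a0 i * (F n i - F0 i)|
          ≤ |(a n i - a0 i) * F n i| + |a0 i * (F n i - F0 i)| := abs_add_le _ _
        _ ≤ |a0 i - a n i| * C + a0 i * |F n i - F0 i| := by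
            rw [abs_mul, abs_mul, abs_of_nonneg (ha0_nonneg i), abs_sub_comm]
            exact add_le_add (mul_le_mul_of_nonneg_left (hFb n i) (abs_nonneg _)) le_rfl
    have hrhs_summ : Summable (fun i => |a0 i - a n i| * C + a0 i * |F n i - F0 i|) :=
      ((habs_summ n).mul_right C).add (hdiff_summ n)
    calc |∑' i, a n i * F n i - ∑' i, a0 i * F0 i|
        = |∑' i, (a n i * F n i - a0 i * F0 i)| := by rw [hd]
      _ ≤ ∑' i, |a n i * F n i - a0 i * F0 i| := by
          have := norm_tsum_le_tsum_norm (f := fun i => a n i * F n i - a0 i * F0 i)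
            (by simpa [Real.norm_eq_abs] using hsd.abs)
          simpa [Real.norm_eq_abs] using this
      _ ≤ ∑' i, (|a0 i - a n i| * C + a0 i * |F n i - F0 i|) := Summable.tsum_le_tsum hb hsd.abs hrhs_summ
      _ = C * ∑' i, |a0 i - a n i| + ∑' i, a0 i * |F n i - F0 i| := by
          rw [((habs_summ n).mul_right C).tsum_add (hdiff_summ n), tsum_mul_right, mul_comm]
  rw [tendsto_iff_dist_tendsto_zero]
  have hz : Tendsto (fun n => C * ∑' i, |a0 i - a n i| + ∑' i, a0 i * |F n i - F0 i|)
      atTop (𝓝 0) := by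
    have := (htv.const_mul C).add herr
    simpa using this
  refine squeeze_zero (fun n => dist_nonneg) (fun n => ?_) hz
  rw [Real.dist_eq]
  exact hbound n

private lemma measure_ext_of_singleton {α : Type*} [MeasurableSpace α]
    [MeasurableSingletonClass α] [Countable α] {m1 m2 : Measure α}
    (h : ∀ a, m1 {a} = m2 {a}) : m1 = m2 := by
  ext s hs
  rw [← Measure.tsum_indicator_apply_singleton m1 s hs,
    ← Measure.tsum_indicator_apply_singleton m2 s hs]
  exact tsum_congr fun a => by by_cases ha : a ∈ s <;> simp [Set.indicator_apply, ha, h a]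

instance {α : Type*} [MeasurableSpace α] [MeasurableSingletonClass α] [Countable α] :
    MeasurableSingletonClass (ProbabilityMeasure α) := by
  constructor
  intro ν
  have hkey : {ν} = ⋂ a : α,
      (fun m : ProbabilityMeasure α => (m : Measure α) {a}) ⁻¹' {(ν : Measure α) {a}} := by
    ext m
    simp only [Set.mem_singleton_iff, Set.mem_iInter, Set.mem_preimage]
    constructor
    · rintro rfl a; rfl
    · intro h
      exact Subtype.ext (measure_ext_of_singleton h)
  rw [hkey]
  exact MeasurableSet.iInter fun a =>
    ((Measure.measurable_coe (measurableSet_singleton a)).comp measurable_subtype_coe)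
      (measurableSet_singleton _)

private lemma aesm_of_countable {α : Type*} [MeasurableSpace α] [MeasurableSingletonClass α]
    {μ : Measure α} {S : Set α} (hS : S.Countable) (hμ : μ Sᶜ = 0) (f : α → ℝ) :
    AEStronglyMeasurable f μ := by
  classical
  refine ⟨S.indicator f, Measurable.stronglyMeasurable ?_, ?_⟩
  · refine measurable_zero.measurable_of_countable_ne (hS.mono ?_)
    intro x hx
    by_contra hxS
    exact hx (Set.indicator_of_notMem hxS f).symm
  · have hsub : {x | f x ≠ S.indicator f x} ⊆ Sᶜ := by
      intro x hx hxS
      exact hx (Set.indicator_of_mem hxS f).symm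
    exact (ae_iff).mpr (measure_mono_null hsub hμ)

private lemma hasSum_toReal_singleton {α : Type*} [MeasurableSpace α]
    [MeasurableSingletonClass α] [Countable α] (ν : Measure α) [IsProbabilityMeasure ν] :
    HasSum (fun a => (ν {a}).toReal) 1 := by
  have h : ∑' a : α, ν {a} = 1 := by
    have := Measure.tsum_indicator_apply_singleton ν Set.univ MeasurableSet.univ
    simpa using this
  have hsumm : Summable (fun a => (ν {a}).toReal) :=
    ENNReal.summable_toReal (by rw [h]; exact ENNReal.one_ne_top)
  have ht : ∑' a, (ν {a}).toReal = 1 := by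
    rw [← ENNReal.tsum_toReal_eq (fun a => measure_ne_top ν _), h, ENNReal.toReal_one]
  exact ht ▸ hsumm.hasSum

private lemma infoMeasure_integral {X Y : Type*}
    [MeasurableSpace X] [MeasurableSingletonClass X] [Countable X]
    [TopologicalSpace X] [DiscreteTopology X]
    [MeasurableSpace Y] [TopologicalSpace Y] [DiscreteTopology Y] [Countable Y] [BorelSpace Y]
    [Nonempty Y]
    (μ : Measure (X × Y)) [IsProbabilityMeasure μ]
    (f : (X × ProbabilityMeasure Y) →ᵇ ℝ) :
    ∫ p, f p ∂(infoMeasure μ) =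
      ∑' x : X, (μ.fst {x}).toReal * f (x, ⟨μ.condKernel x, inferInstance⟩) := by
  classical
  set T : X → X × ProbabilityMeasure Y := fun x => (x, ⟨μ.condKernel x, inferInstance⟩) with hT
  have hTm : Measurable T := measurable_of_countable T
  haveI hν : IsProbabilityMeasure μ.fst := Measure.isProbabilityMeasure_map measurable_fst.aemeasurable
  have hinfo : infoMeasure μ = μ.fst.map T := rfl
  have hfm : AEStronglyMeasurable f (μ.fst.map T) := by
    refine aesm_of_countable (S := Set.range T) (Set.countable_range T) ?_ f
    rw [Measure.map_apply hTm (Set.countable_range T).measurableSet.compl]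
    have : T ⁻¹' (Set.range T)ᶜ = ∅ := by
      ext x; simp [Set.mem_preimage]
    rw [this, measure_empty]
  rw [hinfo, integral_map hTm.aemeasurable hfm]
  have hint : Integrable (fun x => f (T x)) μ.fst :=
    ⟨(measurable_of_countable _).aestronglyMeasurable,
      HasFiniteIntegral.of_bounded (C := ‖f‖)
        (Eventually.of_forall fun x => f.norm_coe_le_norm (T x))⟩
  rw [integral_countable' hint]
  simp [smul_eq_mul, measureReal_def, hT]

private noncomputable def indBCF (α : Type*) [TopologicalSpace α] [DiscreteTopology α]
    (s : Set α) : α →ᵇ ℝ :=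
  BoundedContinuousFunction.ofNormedAddCommGroup (s.indicator 1) continuous_of_discreteTopology 1
    (fun x => by
      classical
      by_cases h : x ∈ s <;> simp [Set.indicator_apply, h])

set_option maxHeartbeats 16000000 in
theorem stmt16 {X Y : Type*}
    [MeasurableSpace X] [TopologicalSpace X] [DiscreteTopology X] [Countable X] [BorelSpace X]
    [MeasurableSpace Y] [TopologicalSpace Y] [DiscreteTopology Y] [Countable Y] [BorelSpace Y]
    [Nonempty Y]
    (μ : ℕ → Measure (X × Y)) (μ₀ : Measure (X × Y))
    [∀ n, IsProbabilityMeasure (μ n)] [IsProbabilityMeasure μ₀]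
    (hweak : WeakTendsto μ μ₀) :
    WeakTendsto (fun n => infoMeasure (μ n)) (infoMeasure μ₀) := by
  intro f
  -- Step 1: pointwise set convergence (every subset of the countable discrete X × Y).
  have hset : ∀ s : Set (X × Y),
      Tendsto (fun n => ((μ n) s).toReal) atTop (𝓝 ((μ₀ s).toReal)) := by
    intro s
    have hs : MeasurableSet s := (Set.to_countable s).measurableSet
    have h := hweak (indBCF (X × Y) s)
    simpa [indBCF, integral_indicator_one hs, measureReal_def] using h
  -- marginal masses
  have hfs : ∀ (ρ : Measure (X × Y)) (x : X), ρ.fst {x} = ρ ({x} ×ˢ (Set.univ : Set Y)) := by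
    intro ρ x
    rw [Measure.fst_apply (measurableSet_singleton x), ← Set.prod_univ]
  have hfstset : ∀ x : X, Tendsto (fun n => ((μ n).fst {x}).toReal) atTop
      (𝓝 ((μ₀.fst {x}).toReal)) := by
    intro x
    simpa only [hfs] using hset ({x} ×ˢ (Set.univ : Set Y))
  haveI : ∀ n, IsProbabilityMeasure (μ n).fst := fun n =>
    Measure.isProbabilityMeasure_map measurable_fst.aemeasurable
  haveI : IsProbabilityMeasure μ₀.fst := Measure.isProbabilityMeasure_map measurable_fst.aemeasurable
  -- Step 2: reduce to tsums
  have key : Tendsto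
      (fun n => ∑' x : X, ((μ n).fst {x}).toReal *
        f (x, ⟨(μ n).condKernel x, inferInstance⟩)) atTop
      (𝓝 (∑' x : X, (μ₀.fst {x}).toReal * f (x, ⟨μ₀.condKernel x, inferInstance⟩))) := by
    refine lemB (a := fun n x => ((μ n).fst {x}).toReal)
      (a0 := fun x => (μ₀.fst {x}).toReal)
      (F := fun n x => f (x, ⟨(μ n).condKernel x, inferInstance⟩))
      (F0 := fun x => f (x, ⟨μ₀.condKernel x, inferInstance⟩)) (C := ‖f‖)
      (fun n x => ENNReal.toReal_nonneg) (fun x => ENNReal.toReal_nonneg)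
      (fun n => (hasSum_toReal_singleton (μ n).fst).summable)
      (hasSum_toReal_singleton μ₀.fst).summable
      (fun n => by
        rw [(hasSum_toReal_singleton (μ n).fst).tsum_eq,
          (hasSum_toReal_singleton μ₀.fst).tsum_eq])
      hfstset
      (fun n x => by simpa [Real.norm_eq_abs] using f.norm_coe_le_norm _)
      (fun x => by simpa [Real.norm_eq_abs] using f.norm_coe_le_norm _)
      ?_
    -- convergence of conditional kernels at points of positive mass
    intro x hx
    replace hx : 0 < (μ₀.fst {x}).toReal := hx
    have h0 : μ₀.fst {x} ≠ 0 := by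
      intro h; rw [h] at hx; simp at hx
    set P : ℕ → ProbabilityMeasure Y := fun n => ⟨(μ n).condKernel x, inferInstance⟩ with hP
    set P0 : ProbabilityMeasure Y := ⟨μ₀.condKernel x, inferInstance⟩ with hP0
    have hPt : Tendsto P atTop (𝓝 P0) := by
      rw [ProbabilityMeasure.tendsto_iff_forall_integral_tendsto]
      intro g
      have hgint : ∀ (κ : Measure Y) [IsProbabilityMeasure κ],
          ∫ y, g y ∂κ = ∑' y : Y, (κ {y}).toReal * g y := by
        intro κ hκ
        have hint : Integrable (fun y => g y) κ :=
          ⟨(measurable_of_countable _).aestronglyMeasurable,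
            HasFiniteIntegral.of_bounded (C := ‖g‖)
              (Eventually.of_forall fun y => g.norm_coe_le_norm y)⟩
        rw [integral_countable' hint]
        simp [smul_eq_mul, measureReal_def]
      have e1 : ∀ n, ∫ y, g y ∂(P n : Measure Y)
          = ∑' y : Y, (((μ n).condKernel x) {y}).toReal * g y := fun n =>
        hgint _
      have e0 : ∫ y, g y ∂(P0 : Measure Y)
          = ∑' y : Y, ((μ₀.condKernel x) {y}).toReal * g y := hgint _
      simp only [e1, e0]
      refine lemB (a := fun n y => (((μ n).condKernel x) {y}).toReal)
        (a0 := fun y => ((μ₀.condKernel x) {y}).toReal)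
        (F := fun _ y => g y) (F0 := fun y => g y) (C := ‖g‖)
        (fun n y => ENNReal.toReal_nonneg) (fun y => ENNReal.toReal_nonneg)
        (fun n => (hasSum_toReal_singleton ((μ n).condKernel x)).summable)
        (hasSum_toReal_singleton (μ₀.condKernel x)).summable
        (fun n => by
          rw [(hasSum_toReal_singleton ((μ n).condKernel x)).tsum_eq,
            (hasSum_toReal_singleton (μ₀.condKernel x)).tsum_eq])
        ?_
        (fun n y => by simpa [Real.norm_eq_abs] using g.norm_coe_le_norm y)
        (fun y => by simpa [Real.norm_eq_abs] using g.norm_coe_le_norm y)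
        (fun y _ => tendsto_const_nhds)
      -- pointwise convergence of conditional probabilities
      intro y
      have hform : ∀ (ρ : Measure (X × Y)) [IsProbabilityMeasure ρ], ρ.fst {x} ≠ 0 →
          ((ρ.condKernel x) {y}).toReal
            = (ρ ({x} ×ˢ ({y} : Set Y))).toReal / (ρ.fst {x}).toReal := by
        intro ρ hρ hρ0
        rw [Measure.condKernel_apply_of_ne_zero hρ0, ENNReal.toReal_mul, ENNReal.toReal_inv]
        rw [div_eq_inv_mul]
      have hlim : ((μ₀.condKernel x) {y}).toReal
          = (μ₀ ({x} ×ˢ ({y} : Set Y))).toReal / (μ₀.fst {x}).toReal :=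
        hform μ₀ h0
      have hev : ∀ᶠ n in atTop, (((μ n).condKernel x) {y}).toReal
          = (μ n ({x} ×ˢ ({y} : Set Y))).toReal / ((μ n).fst {x}).toReal := by
        have hpos : ∀ᶠ n in atTop, 0 < ((μ n).fst {x}).toReal :=
          (hfstset x).eventually (eventually_gt_nhds hx)
        filter_upwards [hpos] with n hn
        refine hform (μ n) ?_
        intro h; rw [h] at hn; simp at hn
      have hdiv : Tendsto (fun n => (μ n ({x} ×ˢ ({y} : Set Y))).toReal
          / ((μ n).fst {x}).toReal) atTop
          (𝓝 ((μ₀ ({x} ×ˢ ({y} : Set Y))).toReal / (μ₀.fst {x}).toReal)) :=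
        (hset ({x} ×ˢ ({y} : Set Y))).div (hfstset x) (ne_of_gt hx)
      show Tendsto (fun n => (((μ n).condKernel x) {y}).toReal) atTop
        (𝓝 (((μ₀.condKernel x) {y}).toReal))
      rw [hlim]
      exact hdiv.congr' (hev.mono fun n hn => hn.symm)
    have hxy : Tendsto (fun n => ((x, P n) : X × ProbabilityMeasure Y)) atTop (𝓝 (x, P0)) :=
      tendsto_const_nhds.prodMk_nhds hPt
    exact ((f.continuous.tendsto (x, P0)).comp hxy)
  have e : ∀ (ρ : Measure (X × Y)) [IsProbabilityMeasure ρ],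
      ∫ p, f p ∂(infoMeasure ρ) =
        ∑' x : X, (ρ.fst {x}).toReal * f (x, ⟨ρ.condKernel x, inferInstance⟩) :=
    fun ρ _ => infoMeasure_integral ρ f
  simp only [e]
  exact key
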